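/- Let Γ be a group equipped with an action of the group Σ of order two (whose nontrivial element acts by an automorphism of Γ), and let Σ act on the unitary group U(n) by entrywise complex conjugation, whose fixed subgroup U(n)^Σ is the group O(n) of real orthogonal matrices. Then the assignment ρ ↦ ρ̂ induces a bijection from the set of Σ-equivariant group homomorphisms ρ : Γ → U(n) modulo conjugation by elements of O(n), onto the set of homomorphisms of Σ-augmentations χ : Γ⋊Σ → U(n)⋊Σ modulo conjugation by elements (u,1) with u ∈ U(n). -/

import Mathlib

open Matrix SemidirectProduct
open scoped Matrix.Norms.L2Operator

noncomputable instance matCStarAux (n : ℕ) : CStarAlgebra (Matrix (Fin n) (Fin n) ℂ) := { }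

lemma transpose_aeval_aux {n : ℕ} (c : Matrix (Fin n) (Fin n) ℂ) (p : Polynomial ℂ) :
    (Polynomial.aeval c p)ᵀ = Polynomial.aeval cᵀ p := by
  rw [Polynomial.aeval_eq_sum_range, Polynomial.aeval_eq_sum_range]
  rw [Matrix.transpose_sum]
  simp [Matrix.transpose_smul, Matrix.transpose_pow]

lemma takagi_aux {n : ℕ} (c : Matrix (Fin n) (Fin n) ℂ)
    (hc : c ∈ unitary (Matrix (Fin n) (Fin n) ℂ)) (hsym : cᵀ = c) :
    ∃ u ∈ unitary (Matrix (Fin n) (Fin n) ℂ), uᵀ = u ∧ u * u = c := by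
  have hnormal : IsStarNormal c := isStarNormal_of_mem_unitary hc
  have hsphere : spectrum ℂ c ⊆ Metric.sphere (0:ℂ) 1 :=
    spectrum.subset_circle_of_unitary hc
  have habs : ∀ x ∈ spectrum ℂ c, ‖x‖ = 1 := by
    intro x hx
    have := hsphere hx
    simpa [Complex.dist_eq] using this
  set f : ℂ → ℂ := fun z => Complex.exp (Complex.log z / 2) with hf
  have hfsq : ∀ x ∈ spectrum ℂ c, f x * f x = x := by
    intro x hx
    have hx0 : x ≠ 0 := by
      intro h; have := habs x hx; rw [h] at this; simp at this
    rw [hf]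
    simp only []
    rw [← Complex.exp_add]
    rw [← add_div]
    norm_num
    exact Complex.exp_log hx0
  have hfabs : ∀ x ∈ spectrum ℂ c, ‖f x‖ = 1 := by
    intro x hx
    rw [hf]
    simp only [Complex.norm_exp]
    have : (Complex.log x / 2).re = Real.log ‖x‖ / 2 := by
      simp [Complex.div_re, Complex.log_re]
    rw [this, habs x hx]
    simp
  set t := (Matrix.finite_spectrum c).toFinset with ht
  set p := Lagrange.interpolate t id f with hp
  have hpeval : ∀ x ∈ spectrum ℂ c, p.eval x = f x := by
    intro x hx
    have hxt : x ∈ t := by simp [ht, hx]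
    exact Lagrange.eval_interpolate_at_node f (Set.injOn_id _) hxt
  refine ⟨cfc p.eval c, ?_, ?_, ?_⟩
  · rw [cfc_unitary_iff p.eval c]
    intro x hx
    rw [hpeval x hx]
    rw [Complex.star_def, ← Complex.normSq_eq_conj_mul_self]
    rw [← Complex.sq_norm, hfabs x hx]
    norm_num
  · rw [cfc_polynomial (R := ℂ) (p := IsStarNormal) p c, transpose_aeval_aux, hsym]
  · rw [← cfc_mul (p := IsStarNormal) p.eval p.eval c
      ((Polynomial.continuous p).continuousOn) ((Polynomial.continuous p).continuousOn)]
    have : cfc (p := IsStarNormal) (fun x => p.eval x * p.eval x) c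
        = cfc (p := IsStarNormal) (id : ℂ → ℂ) c := by
      apply cfc_congr (p := IsStarNormal)
      intro x hx
      simp only [id]
      rw [hpeval x hx]
      exact hfsq x hx
    rw [this, cfc_id ℂ c]

/-- The set of Σ-equivariant group homomorphisms `ρ : Γ → G`. -/
def EquivHom {S Γ G : Type*} [Group S] [Group Γ] [Group G]
    (φΓ : S →* MulAut Γ) (φG : S →* MulAut G) :=
  {ρ : Γ →* G // ∀ (s : S) (γ : Γ), ρ (φΓ s γ) = φG s (ρ γ)}

/-- The set of homomorphisms of Σ-augmentations `χ : Γ⋊Σ → G⋊Σ`. -/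
def AugHom {S Γ G : Type*} [Group S] [Group Γ] [Group G]
    (φΓ : S →* MulAut Γ) (φG : S →* MulAut G) :=
  {χ : Γ ⋊[φΓ] S →* G ⋊[φG] S // ∀ x : Γ ⋊[φΓ] S, (χ x).right = x.right}

/-- The assignment `ρ ↦ ρ̂`, `(γ, σ) ↦ (ρ(γ), σ)`. -/
def hatFun {S Γ G : Type*} [Group S] [Group Γ] [Group G]
    (φΓ : S →* MulAut Γ) (φG : S →* MulAut G) (ρ : EquivHom φΓ φG) : AugHom φΓ φG :=
  ⟨{ toFun := fun x => ⟨ρ.1 x.left, x.right⟩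
     map_one' := by ext <;> simp
     map_mul' := fun x y => by ext <;> simp [ρ.2] },
   fun x => rfl⟩

set_option maxHeartbeats 1000000 in
/-- Let `Σ` be a group of order two acting on a group `Γ`, and acting on `U(n)` by entrywise
complex conjugation (with fixed subgroup `O(n)`, the real orthogonal matrices). Then `ρ ↦ ρ̂`
induces a bijection from Σ-equivariant homomorphisms `Γ → U(n)` modulo conjugation by
elements of `O(n)` onto homomorphisms of Σ-augmentations `Γ⋊Σ → U(n)⋊Σ` modulo conjugation
by elements `(u, 1)` with `u ∈ U(n)`. -/
theorem stmt8 (n : ℕ) {S Γ : Type*} [Group S] [Group Γ]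
    (hS : Nat.card S = 2)
    (φΓ : S →* MulAut Γ)
    (φU : S →* MulAut (Matrix.unitaryGroup (Fin n) ℂ))
    (hφU : ∀ s : S, s ≠ 1 → ∀ u : Matrix.unitaryGroup (Fin n) ℂ,
      ((φU s u : Matrix (Fin n) (Fin n) ℂ))
        = (u : Matrix (Fin n) (Fin n) ℂ).map (starRingEnd ℂ)) :
    ∃ e : Quot (fun ρ₁ ρ₂ : EquivHom φΓ φU =>
            ∃ g : Matrix.unitaryGroup (Fin n) ℂ,
              ((g : Matrix (Fin n) (Fin n) ℂ).map (starRingEnd ℂ)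
                  = (g : Matrix (Fin n) (Fin n) ℂ)) ∧
              ∀ γ : Γ, ρ₂.1 γ = g * ρ₁.1 γ * g⁻¹)
          ≃ Quot (fun χ₁ χ₂ : AugHom φΓ φU =>
            ∃ u : Matrix.unitaryGroup (Fin n) ℂ, ∀ x : Γ ⋊[φΓ] S,
              χ₂.1 x = SemidirectProduct.inl u * χ₁.1 x * (SemidirectProduct.inl u)⁻¹),
      ∀ ρ : EquivHom φΓ φU, e (Quot.mk _ ρ) = Quot.mk _ (hatFun φΓ φU ρ) := by
  classical
  obtain ⟨σ, hσ1, hσuniq⟩ := (Nat.card_eq_two_iff' (1 : S)).mp hS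
  have hall : ∀ s : S, s = 1 ∨ s = σ := fun s => by
    rcases eq_or_ne s 1 with h | h
    · exact Or.inl h
    · exact Or.inr (hσuniq s h)
  have hσσ : σ * σ = 1 := by
    rcases hall (σ * σ) with h | h
    · exact h
    · exact absurd (mul_right_cancel (h.trans (one_mul σ).symm)) hσ1
  have hφσ : ∀ u : Matrix.unitaryGroup (Fin n) ℂ,
      ((φU σ u : Matrix (Fin n) (Fin n) ℂ))
        = (u : Matrix (Fin n) (Fin n) ℂ).map (starRingEnd ℂ) := hφU σ hσ1
  have hreal_iff : ∀ g : Matrix.unitaryGroup (Fin n) ℂ,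
      ((g : Matrix (Fin n) (Fin n) ℂ).map (starRingEnd ℂ) = (g : Matrix (Fin n) (Fin n) ℂ))
        ↔ φU σ g = g := by
    intro g
    rw [← hφσ g]
    exact Subtype.ext_iff.symm
  have key : ∀ (u : Matrix.unitaryGroup (Fin n) ℂ)
      (y : Matrix.unitaryGroup (Fin n) ℂ ⋊[φU] S),
      inl u * y * (inl u)⁻¹ = ⟨u * y.left * φU y.right u⁻¹, y.right⟩ := by
    intro u y
    rw [← _root_.map_inv]
    ext
    · simp [SemidirectProduct.mul_left, SemidirectProduct.mul_right, mul_assoc]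
    · simp [SemidirectProduct.mul_right]
  -- well-definedness
  have hwd : ∀ ρ₁ ρ₂ : EquivHom φΓ φU,
      (∃ g : Matrix.unitaryGroup (Fin n) ℂ,
        ((g : Matrix (Fin n) (Fin n) ℂ).map (starRingEnd ℂ) = (g : Matrix (Fin n) (Fin n) ℂ)) ∧
        ∀ γ : Γ, ρ₂.1 γ = g * ρ₁.1 γ * g⁻¹) →
      ∃ u : Matrix.unitaryGroup (Fin n) ℂ, ∀ x : Γ ⋊[φΓ] S,
        (hatFun φΓ φU ρ₂).1 x = inl u * (hatFun φΓ φU ρ₁).1 x * (inl u)⁻¹ := by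
    rintro ρ₁ ρ₂ ⟨g, hg, hconj⟩
    have hgfix : ∀ s : S, φU s g⁻¹ = g⁻¹ := by
      intro s
      rcases hall s with h | h
      · rw [h]; simp
      · rw [h, _root_.map_inv, (hreal_iff g).mp hg]
    refine ⟨g, fun x => ?_⟩
    rw [key g]
    refine SemidirectProduct.ext ?_ rfl
    show ρ₂.1 x.left = g * ρ₁.1 x.left * φU x.right g⁻¹
    rw [hgfix x.right]
    exact hconj x.left
  -- injectivity core
  have hinjcore : ∀ ρ₁ ρ₂ : EquivHom φΓ φU,
      (∃ u : Matrix.unitaryGroup (Fin n) ℂ, ∀ x : Γ ⋊[φΓ] S,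
        (hatFun φΓ φU ρ₂).1 x = inl u * (hatFun φΓ φU ρ₁).1 x * (inl u)⁻¹) →
      ∃ g : Matrix.unitaryGroup (Fin n) ℂ,
        ((g : Matrix (Fin n) (Fin n) ℂ).map (starRingEnd ℂ) = (g : Matrix (Fin n) (Fin n) ℂ)) ∧
        ∀ γ : Γ, ρ₂.1 γ = g * ρ₁.1 γ * g⁻¹ := by
    rintro ρ₁ ρ₂ ⟨u, hu⟩
    have h1 := hu (inr σ)
    rw [key u] at h1
    have h1l := congrArg SemidirectProduct.left h1
    have h1l' : (1 : Matrix.unitaryGroup (Fin n) ℂ) = u * φU σ u⁻¹ := by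
      simpa [hatFun] using h1l
    have hfix : φU σ u = u := by
      have h4 : u⁻¹ = φU σ u⁻¹ := inv_eq_of_mul_eq_one_right h1l'.symm
      rw [_root_.map_inv] at h4
      exact inv_injective h4.symm
    refine ⟨u, (hreal_iff u).mpr hfix, fun γ => ?_⟩
    have h := hu (inl γ)
    rw [key u] at h
    have hl := congrArg SemidirectProduct.left h
    simpa [hatFun] using hl
  -- surjectivity core
  have hsurjcore : ∀ χ : AugHom φΓ φU, ∃ ρs : EquivHom φΓ φU,
      ∃ u : Matrix.unitaryGroup (Fin n) ℂ, ∀ x : Γ ⋊[φΓ] S,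
        χ.1 x = inl u * (hatFun φΓ φU ρs).1 x * (inl u)⁻¹ := by
    intro χ
    have hχr : ∀ x : Γ ⋊[φΓ] S, (χ.1 x).right = x.right := χ.2
    have hinlr : ∀ γ : Γ, (χ.1 (inl γ)).right = 1 := fun γ => by
      rw [hχr]; rfl
    have hinrr : (χ.1 (inr σ)).right = σ := by rw [hχr]; rfl
    have hρ₀mul : ∀ γ₁ γ₂ : Γ, (χ.1 (inl (γ₁ * γ₂))).left
        = (χ.1 (inl γ₁)).left * (χ.1 (inl γ₂)).left := by
      intro γ₁ γ₂
      rw [_root_.map_mul, _root_.map_mul, SemidirectProduct.mul_left, hinlr γ₁]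
      simp
    have hρ₀one : (χ.1 (inl (1:Γ))).left = 1 := by
      rw [show (inl (1:Γ) : Γ ⋊[φΓ] S) = 1 from _root_.map_one inl, _root_.map_one]
      rfl
    have hcc : (χ.1 (inr σ)).left * φU σ ((χ.1 (inr σ)).left) = 1 := by
      have h0 : (inr σ : Γ ⋊[φΓ] S) * inr σ = 1 := by rw [← _root_.map_mul, hσσ, _root_.map_one]
      have h1 : χ.1 (inr σ) * χ.1 (inr σ) = 1 := by rw [← _root_.map_mul, h0, _root_.map_one]
      have h2 := congrArg SemidirectProduct.left h1
      rw [SemidirectProduct.mul_left, hinrr] at h2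
      exact h2
    have hswap : ∀ γ : Γ, (inl (φΓ σ γ) : Γ ⋊[φΓ] S) * inr σ = inr σ * inl γ := by
      intro γ
      rw [SemidirectProduct.inl_aut, mul_assoc, mul_assoc, ← _root_.map_mul, inv_mul_cancel,
        _root_.map_one, mul_one]
    have hcomm : ∀ γ : Γ, (χ.1 (inl (φΓ σ γ))).left * (χ.1 (inr σ)).left
        = (χ.1 (inr σ)).left * φU σ ((χ.1 (inl γ)).left) := by
      intro γ
      have h := congrArg SemidirectProduct.left (congrArg χ.1 (hswap γ))
      rw [_root_.map_mul, _root_.map_mul, SemidirectProduct.mul_left, SemidirectProduct.mul_left,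
        hinlr (φΓ σ γ), hinrr] at h
      simpa using h
    have hφc : ((χ.1 (inr σ)).left)⁻¹ = φU σ ((χ.1 (inr σ)).left) :=
      inv_eq_of_mul_eq_one_right hcc
    have hCsym : (((χ.1 (inr σ)).left : Matrix (Fin n) (Fin n) ℂ))ᵀ
        = ((χ.1 (inr σ)).left : Matrix (Fin n) (Fin n) ℂ) := by
      have h1 : ((χ.1 (inr σ)).left : Matrix (Fin n) (Fin n) ℂ).map (starRingEnd ℂ)
          = star ((χ.1 (inr σ)).left : Matrix (Fin n) (Fin n) ℂ) := by
        rw [← hφσ, ← hφc, ← Unitary.star_eq_inv]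
        rfl
      ext i j
      have h2 := congrArg (fun m => m j i) h1
      simp only [Matrix.map_apply, Matrix.star_apply] at h2
      have h3 := congrArg (starRingEnd ℂ) h2
      simp only [starRingEnd_apply, star_star] at h3
      simpa [Matrix.transpose_apply] using h3
    obtain ⟨U0, hU0mem, hU0sym, hU0sq⟩ :=
      takagi_aux ((χ.1 (inr σ)).left : Matrix (Fin n) (Fin n) ℂ) ((χ.1 (inr σ)).left).2 hCsym
    refine ?_
    have hcu : (χ.1 (inr σ)).left
        = (⟨U0, hU0mem⟩ : Matrix.unitaryGroup (Fin n) ℂ)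
          * (φU σ (⟨U0, hU0mem⟩ : Matrix.unitaryGroup (Fin n) ℂ))⁻¹ := by
      apply Subtype.ext
      have h1 : (((φU σ (⟨U0, hU0mem⟩ : Matrix.unitaryGroup (Fin n) ℂ))⁻¹ :
            Matrix.unitaryGroup (Fin n) ℂ) : Matrix (Fin n) (Fin n) ℂ)
          = star (U0.map (starRingEnd ℂ)) := by
        rw [← Unitary.star_eq_inv]
        show star ((φU σ (⟨U0, hU0mem⟩ : Matrix.unitaryGroup (Fin n) ℂ) :
          Matrix (Fin n) (Fin n) ℂ)) = _
        rw [hφσ]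
      have h2 : star (U0.map (starRingEnd ℂ)) = U0 := by
        ext i j
        simp only [Matrix.star_apply, Matrix.map_apply, starRingEnd_apply, star_star]
        exact congrFun (congrFun hU0sym i) j
      show ((χ.1 (inr σ)).left : Matrix (Fin n) (Fin n) ℂ) = _
      rw [MulMemClass.coe_mul, h1, h2]
      exact hU0sq.symm
    set u : Matrix.unitaryGroup (Fin n) ℂ := ⟨U0, hU0mem⟩ with hudef
    let ρ' : Γ →* Matrix.unitaryGroup (Fin n) ℂ :=
      { toFun := fun γ => u⁻¹ * (χ.1 (inl γ)).left * u
        map_one' := by show u⁻¹ * (χ.1 (inl (1:Γ))).left * u = 1; rw [hρ₀one]; simp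
        map_mul' := by
          intro a b
          show u⁻¹ * (χ.1 (inl (a * b))).left * u
            = (u⁻¹ * (χ.1 (inl a)).left * u) * (u⁻¹ * (χ.1 (inl b)).left * u)
          rw [hρ₀mul a b]
          group }
    have hequi : ∀ (s : S) (γ : Γ), ρ' (φΓ s γ) = φU s (ρ' γ) := by
      intro s γ
      rcases hall s with h | h
      · rw [h]; simp
      · rw [h]
        show u⁻¹ * (χ.1 (inl (φΓ σ γ))).left * u
          = φU σ (u⁻¹ * (χ.1 (inl γ)).left * u)
        have h1 : (χ.1 (inl (φΓ σ γ))).left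
            = (χ.1 (inr σ)).left * φU σ ((χ.1 (inl γ)).left) * ((χ.1 (inr σ)).left)⁻¹ := by
          rw [← hcomm γ, mul_inv_cancel_right]
        rw [h1, hcu, _root_.map_mul, _root_.map_mul, _root_.map_inv]
        group
    refine ⟨⟨ρ', hequi⟩, u, fun x => ?_⟩
    rw [show (hatFun φΓ φU ⟨ρ', hequi⟩).1 x = ⟨ρ' x.left, x.right⟩ from rfl, key u]
    have hleft : (χ.1 x).left = (χ.1 (inl x.left)).left * (χ.1 (inr x.right)).left := by
      conv_lhs => rw [← inl_left_mul_inr_right x]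
      rw [_root_.map_mul, SemidirectProduct.mul_left, hinlr]
      simp
    refine SemidirectProduct.ext ?_ (hχr x)
    · show (χ.1 x).left = u * ρ' x.left * φU x.right u⁻¹
      rw [hleft]
      show (χ.1 (inl x.left)).left * (χ.1 (inr x.right)).left
          = u * (u⁻¹ * (χ.1 (inl x.left)).left * u) * φU x.right u⁻¹
      rcases hall x.right with h | h
      · rw [h]
        have hone : (χ.1 (inr (1:S))).left = 1 := by
          rw [show (inr (1:S) : Γ ⋊[φΓ] S) = 1 from _root_.map_one inr, _root_.map_one]
          rfl
        rw [hone]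
        simp [mul_assoc]
      · rw [h, _root_.map_inv, hcu]
        group
  -- equivalence of the target relation
  have hAeq : Equivalence (fun χ₁ χ₂ : AugHom φΓ φU =>
      ∃ u : Matrix.unitaryGroup (Fin n) ℂ, ∀ x : Γ ⋊[φΓ] S,
        χ₂.1 x = inl u * χ₁.1 x * (inl u)⁻¹) := by
    constructor
    · intro χ
      exact ⟨1, fun x => by simp⟩
    · rintro χ₁ χ₂ ⟨u, h⟩
      exact ⟨u⁻¹, fun x => by rw [h x, _root_.map_inv]; simp [mul_assoc]⟩
    · rintro χ₁ χ₂ χ₃ ⟨u, h⟩ ⟨v, h'⟩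
      exact ⟨v * u, fun x => by rw [h' x, h x, _root_.map_mul]; simp [mul_assoc, _root_.mul_inv_rev]⟩
  refine ⟨Equiv.ofBijective
    (Quot.lift (fun ρ => Quot.mk _ (hatFun φΓ φU ρ)) (fun ρ₁ ρ₂ h => Quot.sound (hwd ρ₁ ρ₂ h)))
    ⟨?_, ?_⟩, fun ρ => rfl⟩
  · intro a b hab
    obtain ⟨ρ₁, rfl⟩ := Quot.exists_rep a
    obtain ⟨ρ₂, rfl⟩ := Quot.exists_rep b
    have h : Quot.mk _ (hatFun φΓ φU ρ₁) = Quot.mk _ (hatFun φΓ φU ρ₂) := hab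
    exact Quot.sound (hinjcore ρ₁ ρ₂ (hAeq.eqvGen_iff.mp (Quot.eq.mp h)))
  · intro q
    obtain ⟨χ, rfl⟩ := Quot.exists_rep q
    obtain ⟨ρs, hrel⟩ := hsurjcore χ
    exact ⟨Quot.mk _ ρs, Quot.sound hrel⟩
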